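/- Let Γ be a group (with the discrete topology) and let (N_k)_{k∈ℕ} be a sequence of normal subgroups of Γ. Let ℕ⁺ = ℕ ∪ {∞} be the one-point compactification of ℕ, and consider on ℕ⁺ × Γ the equivalence relation (k,t) ~ (l,u) defined by: k = l, and t⁻¹u ∈ N_k when k ∈ ℕ, while t = u when k = ∞. Then the canonical quotient map from ℕ⁺ × Γ onto the quotient space (ℕ⁺ × Γ)/~ (with the quotient topology) is an open map. -/
import Mathlib


open OnePoint

/-- The HLS equivalence relation on `ℕ⁺ × Γ`: `(k,t) ~ (l,u)` iff `k = l`, and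
`t⁻¹ * u ∈ N k` when `k ∈ ℕ`, while `t = u` when `k = ∞`. -/
def hlsRel {Γ : Type*} [Group Γ] (N : ℕ → Subgroup Γ) :
    OnePoint ℕ × Γ → OnePoint ℕ × Γ → Prop := fun a b =>
  a.1 = b.1 ∧
    ((∃ n : ℕ, a.1 = (n : OnePoint ℕ) ∧ a.2⁻¹ * b.2 ∈ N n) ∨
      (a.1 = (∞ : OnePoint ℕ) ∧ a.2 = b.2))

theorem hlsRel_equiv {Γ : Type*} [Group Γ] (N : ℕ → Subgroup Γ) :
    Equivalence (hlsRel N) := by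
  constructor
  · intro a
    refine ⟨rfl, ?_⟩
    cases h : a.1 with
    | infty => exact Or.inr ⟨rfl, rfl⟩
    | coe n => exact Or.inl ⟨n, rfl, by simpa using (N n).one_mem⟩
  · rintro a b ⟨h1, h2⟩
    refine ⟨h1.symm, ?_⟩
    rcases h2 with ⟨n, hn, hm⟩ | ⟨hn, he⟩
    · refine Or.inl ⟨n, h1 ▸ hn, ?_⟩
      have := (N n).inv_mem hm
      simpa [mul_inv_rev] using this
    · exact Or.inr ⟨h1 ▸ hn, he.symm⟩
  · rintro a b c ⟨h1, h2⟩ ⟨h1', h2'⟩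
    refine ⟨h1.trans h1', ?_⟩
    rcases h2 with ⟨n, hn, hm⟩ | ⟨hn, he⟩
    · rcases h2' with ⟨n', hn', hm'⟩ | ⟨hn', he'⟩
      · obtain rfl : n = n' := OnePoint.coe_eq_coe.mp (hn.symm.trans (h1.trans hn'))
        refine Or.inl ⟨n, hn, ?_⟩
        have := (N n).mul_mem hm hm'
        simpa [mul_assoc] using this
      · exfalso
        rw [h1, hn'] at hn
        exact (OnePoint.coe_ne_infty n) hn.symm
    · rcases h2' with ⟨n', hn', hm'⟩ | ⟨hn', he'⟩
      · exfalso
        rw [h1, hn'] at hn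
        exact (OnePoint.coe_ne_infty n') hn
      · exact Or.inr ⟨hn, he.trans he'⟩

theorem hls_quotient_map_isOpenMap {Γ : Type*} [Group Γ] [TopologicalSpace Γ]
    [DiscreteTopology Γ] (N : ℕ → Subgroup Γ) (hnorm : ∀ k, (N k).Normal) :
    IsOpenMap (Quot.mk (hlsRel N)) := by
  have hequiv := hlsRel_equiv N
  intro U hU
  rw [← isQuotientMap_quot_mk.isOpen_preimage]
  have hS : ∀ x, x ∈ Quot.mk (hlsRel N) ⁻¹' (Quot.mk (hlsRel N) '' U) ↔
      ∃ y ∈ U, hlsRel N x y := by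
    intro x
    constructor
    · rintro ⟨y, hyU, hxy⟩
      exact ⟨y, hyU, hequiv.symm (hequiv.eqvGen_iff.mp (Quot.eq.mp hxy))⟩
    · rintro ⟨y, hyU, hxy⟩
      exact ⟨y, hyU, Quot.eq.mpr (hequiv.eqvGen_iff.mpr (hequiv.symm hxy))⟩
  rw [isOpen_iff_forall_mem_open]
  intro x hx
  obtain ⟨y, hyU, hxy⟩ := (hS x).mp hx
  obtain ⟨h1, h2⟩ := hxy
  rcases h2 with ⟨n, hn, hm⟩ | ⟨hn, he⟩
  · -- finite case: neighborhood {n} ×ˢ (coset of N n containing x.2)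
    refine ⟨({((n : ℕ) : OnePoint ℕ)} : Set (OnePoint ℕ)) ×ˢ {s | x.2⁻¹ * s ∈ N n},
      ?_, ?_, ?_⟩
    · rintro ⟨k, s⟩ ⟨hk, hs⟩
      simp only [Set.mem_singleton_iff] at hk
      simp only [Set.mem_setOf_eq] at hs
      refine (hS _).mpr ⟨y, hyU, ?_⟩
      refine ⟨by rw [hk, ← hn, h1], Or.inl ⟨n, hk, ?_⟩⟩
      have : s⁻¹ * y.2 = (x.2⁻¹ * s)⁻¹ * (x.2⁻¹ * y.2) := by group
      rw [this]
      exact (N n).mul_mem ((N n).inv_mem hs) hm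
    · have hsing : IsOpen ({((n : ℕ) : OnePoint ℕ)} : Set (OnePoint ℕ)) := by
        have := OnePoint.isOpenEmbedding_coe.isOpenMap {n} (isOpen_discrete _)
        simpa [Set.image_singleton] using this
      exact hsing.prod (isOpen_discrete _)
    · exact ⟨hn, by simpa using (N n).one_mem⟩
  · -- infinite case: x = y ∈ U
    have hxy2 : x = y := Prod.ext h1 he
    refine ⟨U, ?_, hU, hxy2 ▸ hyU⟩
    intro z hz
    exact (hS z).mpr ⟨z, hz, hequiv.refl z⟩
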